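/- arXiv:1504.04171 — 3 statements merged into one kernel-verified Lean document; each statement's English description precedes it below -/
import Mathlib

section
/- Let q be a prime power and α ∈ 𝔽_{q^3}^*. Then the equation β^q/α + β^{q^2}/α^q + β/α^{q^2} = 1 has exactly q^2 distinct solutions β in 𝔽_{q^3}, and all of these solutions are nonzero. -/
open Polynomial

lemma aux_ncard_root_le {F : Type*} [Field F] (P : F[X]) (hP : P ≠ 0) :
    {x | P.IsRoot x}.ncard ≤ P.natDegree := by
  classical
  have h : {x | P.IsRoot x} = ↑P.roots.toFinset := by
    ext x; simp [Polynomial.mem_roots, hP, Polynomial.IsRoot]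
  rw [h, Set.ncard_coe_finset]
  exact (Multiset.toFinset_card_le _).trans (Polynomial.card_roots' P)

theorem stmt_2 (p n q : ℕ) (hp : p.Prime) (hn : n ≠ 0) (hq : q = p ^ n)
    (F : Type*) [Field F] [Fintype F] (hF : Fintype.card F = q ^ 3)
    (α : F) (hα : α ≠ 0) :
    {β : F | β ^ q / α + β ^ (q ^ 2) / α ^ q + β / α ^ (q ^ 2) = 1}.ncard = q ^ 2 ∧
    (∀ β : F, β ^ q / α + β ^ (q ^ 2) / α ^ q + β / α ^ (q ^ 2) = 1 → β ≠ 0) := by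
  classical
  have hq2 : 2 ≤ q := by
    have h1 : 1 < p ^ n := Nat.one_lt_pow hn hp.one_lt
    omega
  have hq0 : q ≠ 0 := by omega
  have hq1 : 1 ≤ q := by omega
  -- characteristic
  have hchar : CharP F p := by
    have h1 : CharP F (ringChar F) := ringChar.charP F
    have h2 := FiniteField.card F (ringChar F)
    obtain ⟨m, hrp, hcard⟩ := h2
    have : ringChar F = p := by
      have hdvd : p ∣ ringChar F ^ (m : ℕ) := by
        rw [← hcard, hF, hq, ← pow_mul]
        exact dvd_pow_self p (by positivity)
      exact ((Nat.prime_dvd_prime_iff_eq hp hrp).mp (hp.dvd_of_dvd_pow hdvd)).symm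
    rwa [this] at h1
  haveI := hchar
  haveI : Fact p.Prime := ⟨hp⟩
  -- frobenius additivity
  have hadd : ∀ x y : F, (x + y) ^ q = x ^ q + y ^ q := by
    intro x y; rw [hq]; exact add_pow_char_pow x y p n
  have hadd2 : ∀ x y : F, (x + y) ^ (q ^ 2) = x ^ (q ^ 2) + y ^ (q ^ 2) := by
    intro x y
    have : q ^ 2 = q * q := sq q
    simp only [this, pow_mul, hadd]
  set g : F → F := fun β => β ^ q / α + β ^ (q ^ 2) / α ^ q + β / α ^ (q ^ 2) with hg
  have hgadd : ∀ x y : F, g (x + y) = g x + g y := by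
    intro x y
    simp only [hg, hadd, hadd2, add_div]
    ring
  set f : F →+ F := AddMonoidHom.mk' g hgadd with hf
  have hfval : ∀ β, f β = β ^ q / α + β ^ (q ^ 2) / α ^ q + β / α ^ (q ^ 2) := fun _ => rfl
  -- x ^ (q^3) = x
  have hcube : ∀ x : F, x ^ (q ^ 3) = x := by
    intro x; rw [← hF]; exact FiniteField.pow_card x
  -- f β is fixed by Frobenius
  have hfix : ∀ β : F, (f β) ^ q = f β := by
    intro β
    have h3 : (β ^ q / α + β ^ (q ^ 2) / α ^ q) ^ q
        = (β ^ q / α) ^ q + (β ^ (q ^ 2) / α ^ q) ^ q := by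
      rw [hadd]
    rw [hfval, hadd, h3]
    rw [div_pow, div_pow, div_pow, ← pow_mul, ← pow_mul, ← pow_mul, ← pow_mul]
    have e1 : q * q = q ^ 2 := (sq q).symm
    have e2 : q ^ 2 * q = q ^ 3 := by ring
    rw [e1, e2, hcube, hcube]
    ring
  -- the kernel is contained in roots of a polynomial of degree q^2
  set P : F[X] := (C (α ^ q)⁻¹) * X ^ (q ^ 2) + ((C α⁻¹) * X ^ q + (C (α ^ (q ^ 2))⁻¹) * X)
    with hP
  have hαq : (α ^ q)⁻¹ ≠ 0 := inv_ne_zero (pow_ne_zero _ hα)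
  have hdegP : P.degree = (q ^ 2 : ℕ) := by
    have hd1 : ((C α⁻¹) * X ^ q + (C (α ^ (q ^ 2))⁻¹) * X : F[X]).degree ≤ (q : ℕ) := by
      refine (Polynomial.degree_add_le _ _).trans ?_
      refine max_le ((Polynomial.degree_C_mul_X_pow_le _ _)) ?_
      refine (Polynomial.degree_C_mul_X_le _).trans ?_
      exact_mod_cast Nat.one_le_cast.mpr hq1
    have hd2 : ((C (α ^ q)⁻¹) * X ^ (q ^ 2) : F[X]).degree = (q ^ 2 : ℕ) :=
      Polynomial.degree_C_mul_X_pow _ hαq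
    rw [hP, add_comm ((C (α ^ q)⁻¹) * X ^ (q ^ 2)) _,
      Polynomial.degree_add_eq_right_of_degree_lt, hd2]
    rw [hd2]
    refine lt_of_le_of_lt hd1 ?_
    have : q < q ^ 2 := by nlinarith
    exact_mod_cast this
  have hPne : P ≠ 0 := by
    intro h
    rw [h, Polynomial.degree_zero] at hdegP
    exact WithBot.bot_ne_coe hdegP
  have hPdeg : P.natDegree = q ^ 2 := Polynomial.natDegree_eq_of_degree_eq_some hdegP
  have hevalP : ∀ β : F, P.eval β = β ^ q / α + β ^ (q ^ 2) / α ^ q + β / α ^ (q ^ 2) := by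
    intro β
    simp only [hP, Polynomial.eval_add, Polynomial.eval_mul, Polynomial.eval_C,
      Polynomial.eval_pow, Polynomial.eval_X]
    field_simp
    ring
  -- kernel bound
  have hker_sub : (f.ker : Set F) ⊆ {x | P.IsRoot x} := by
    intro x hx
    have : f x = 0 := hx
    simp only [Set.mem_setOf_eq, Polynomial.IsRoot, hevalP, ← hfval, this]
  have hker_le : Nat.card f.ker ≤ q ^ 2 := by
    have e : Nat.card f.ker = (f.ker : Set F).ncard := Nat.card_coe_set_eq _
    rw [e]
    calc (f.ker : Set F).ncard ≤ {x | P.IsRoot x}.ncard :=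
          Set.ncard_le_ncard hker_sub (P.finite_setOf_isRoot hPne)
    _ ≤ P.natDegree := aux_ncard_root_le P hPne
    _ = q ^ 2 := hPdeg
  -- range bound : contained in fixed points of Frobenius
  set Q : F[X] := X ^ q - X with hQ
  have hdegQ : Q.degree = (q : ℕ) := by
    rw [hQ, Polynomial.degree_sub_eq_left_of_degree_lt]
    · exact Polynomial.degree_X_pow q
    · rw [Polynomial.degree_X_pow, Polynomial.degree_X]
      exact_mod_cast hq2
  have hQne : Q ≠ 0 := by
    intro h
    rw [h, Polynomial.degree_zero] at hdegQ
    simp at hdegQ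
  have hQdeg : Q.natDegree = q := Polynomial.natDegree_eq_of_degree_eq_some hdegQ
  set S : Set F := {x | Q.IsRoot x} with hS
  have hSfin : S.Finite := Q.finite_setOf_isRoot hQne
  have hS_le : S.ncard ≤ q := (aux_ncard_root_le Q hQne).trans (le_of_eq hQdeg)
  have hmemS : ∀ x : F, x ∈ S ↔ x ^ q = x := by
    intro x; simp [hS, hQ, Polynomial.IsRoot, sub_eq_zero]
  have hrange_sub : (f.range : Set F) ⊆ S := by
    rintro x ⟨β, rfl⟩
    exact (hmemS _).mpr (hfix β)
  have hrange_le : Nat.card f.range ≤ q := by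
    have e : Nat.card f.range = (f.range : Set F).ncard := Nat.card_coe_set_eq _
    rw [e]
    exact (Set.ncard_le_ncard hrange_sub hSfin).trans hS_le
  -- counting
  have hcardF : Nat.card F = q ^ 3 := by rw [Nat.card_eq_fintype_card, hF]
  have hsplit := AddSubgroup.card_eq_card_quotient_mul_card_addSubgroup f.ker
  have hquot : Nat.card (F ⧸ f.ker) = Nat.card f.range :=
    Nat.card_congr (QuotientAddGroup.quotientKerEquivRange f).toEquiv
  rw [hcardF, hquot] at hsplit
  have hker_eq : Nat.card f.ker = q ^ 2 := by
    have h1 : q * q ^ 2 ≤ q * Nat.card f.ker := by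
      calc q * q ^ 2 = q ^ 3 := by ring
      _ = Nat.card f.range * Nat.card f.ker := hsplit
      _ ≤ q * Nat.card f.ker := Nat.mul_le_mul_right _ hrange_le
    have h2 : q ^ 2 ≤ Nat.card f.ker := Nat.le_of_mul_le_mul_left h1 (by omega)
    omega
  have hrange_eq : Nat.card f.range = q := by
    rw [hker_eq] at hsplit
    have : q * q ^ 2 = Nat.card f.range * q ^ 2 := by
      rw [← hsplit]; ring
    have hq2pos : 0 < q ^ 2 := by positivity
    exact (Nat.eq_of_mul_eq_mul_right hq2pos this).symm
  -- range = S, so 1 is attained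
  have hrange_S : (f.range : Set F) = S := by
    apply Set.eq_of_subset_of_ncard_le hrange_sub _ hSfin
    have e : (f.range : Set F).ncard = q := by
      rw [← hrange_eq]
      exact (Nat.card_coe_set_eq _).symm
    rw [e]
    exact hS_le
  have h1S : (1 : F) ∈ S := (hmemS 1).mpr (one_pow q)
  have h1range : (1 : F) ∈ f.range := by rw [← SetLike.mem_coe, hrange_S]; exact h1S
  obtain ⟨β₀, hβ₀⟩ := h1range
  -- the solution set is a coset of the kernel
  have hsol : {β : F | β ^ q / α + β ^ (q ^ 2) / α ^ q + β / α ^ (q ^ 2) = 1}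
      = (fun k => β₀ + k) '' (f.ker : Set F) := by
    ext β
    simp only [Set.mem_setOf_eq, Set.mem_image, SetLike.mem_coe, AddMonoidHom.mem_ker]
    constructor
    · intro hβ
      rw [← hfval β] at hβ
      refine ⟨β - β₀, ?_, by ring⟩
      rw [map_sub, hβ, hβ₀, sub_self]
    · rintro ⟨k, hk, rfl⟩
      rw [← hfval (β₀ + k), map_add, hβ₀, hk, add_zero]
  constructor
  · rw [hsol, Set.ncard_image_of_injective _ (add_right_injective β₀), ← hker_eq]
    exact (Nat.card_coe_set_eq _).symm
  · intro β hβ hβ0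
    rw [hβ0] at hβ
    simp [zero_pow hq0, zero_pow (show q ^ 2 ≠ 0 by positivity)] at hβ
end

section
/- Let q ≥ 2 be an integer and let r ≥ q³ − 1 be an integer. Define N(r) to be the number of lattice points (i,j) ∈ ℤ² with 0 ≤ (q+1)i − qj < q³ + q² + q, 0 ≤ i + q²j, and qi + j ≤ r. Then N(r+1) = N(r) + q. -/
theorem stmt_7 (q r : ℤ) (hq : 2 ≤ q) (hr : q ^ 3 - 1 ≤ r) :
    ({ij : ℤ × ℤ | 0 ≤ (q + 1) * ij.1 - q * ij.2 ∧
        (q + 1) * ij.1 - q * ij.2 < q ^ 3 + q ^ 2 + q ∧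
        0 ≤ ij.1 + q ^ 2 * ij.2 ∧ q * ij.1 + ij.2 ≤ r + 1}.ncard : ℤ)
      = ({ij : ℤ × ℤ | 0 ≤ (q + 1) * ij.1 - q * ij.2 ∧
        (q + 1) * ij.1 - q * ij.2 < q ^ 3 + q ^ 2 + q ∧
        0 ≤ ij.1 + q ^ 2 * ij.2 ∧ q * ij.1 + ij.2 ≤ r}.ncard : ℤ) + q := by
  have hq0 : (0:ℤ) < q := by linarith
  have hDpos : (0:ℤ) < q^2 + q + 1 := by nlinarith
  have hr0 : (0:ℤ) ≤ r := by nlinarith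
  -- i0 = ceil(q(r+1)/(q^2+q+1))
  obtain ⟨i0, h1, h2⟩ : ∃ i0 : ℤ, q*(r+1) ≤ (q^2+q+1)*i0 ∧
      (q^2+q+1)*i0 < q*(r+1) + (q^2+q+1) := by
    refine ⟨(q*(r+1) + (q^2+q+1) - 1) / (q^2+q+1), ?_, ?_⟩ <;>
    · have hk := Int.mul_ediv_add_emod (q*(r+1) + (q^2+q+1) - 1) (q^2+q+1)
      have hm1 := Int.emod_nonneg (q*(r+1) + (q^2+q+1) - 1) (ne_of_gt hDpos)
      have hm2 := Int.emod_lt_of_pos (q*(r+1) + (q^2+q+1) - 1) hDpos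
      linarith
  -- finiteness of the sublevel sets
  have hfin : ∀ t : ℤ, 0 ≤ t → ({ij : ℤ × ℤ | 0 ≤ (q + 1) * ij.1 - q * ij.2 ∧
      (q + 1) * ij.1 - q * ij.2 < q ^ 3 + q ^ 2 + q ∧
      0 ≤ ij.1 + q ^ 2 * ij.2 ∧ q * ij.1 + ij.2 ≤ t}).Finite := by
    intro t ht
    apply Set.Finite.subset (Set.finite_Icc ((-q, -q) : ℤ × ℤ) ((t + q, t) : ℤ × ℤ))
    rintro ⟨i, j⟩ ⟨ha, ha', hb, hc⟩
    simp only [Set.mem_Icc, Prod.mk_le_mk]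
    have e1 : q^2*((q+1)*i - q*j) + q*(i + q^2*j) = (q^3+q^2+q)*i := by ring
    have e2 : (q+1)*(i + q^2*j) - ((q+1)*i - q*j) = (q^3+q^2+q)*j := by ring
    have e3 : (i + q^2*j) + (q-1)*((q+1)*i - q*j) = q*(q*i + j) := by ring
    refine ⟨⟨?_, ?_⟩, ?_, ?_⟩
    · nlinarith [mul_nonneg (sq_nonneg q) ha, mul_nonneg hq0.le hb, mul_pos hq0 hDpos]
    · -- i ≤ t + q
      nlinarith [mul_le_mul_of_nonneg_left hc hq0.le, mul_nonneg hq0.le ha,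
        mul_pos hq0 hDpos, mul_nonneg hq0.le hq0.le]
    · -- -q ≤ j
      nlinarith [mul_nonneg (by linarith : (0:ℤ) ≤ q+1) hb, mul_pos hq0 hDpos]
    · -- j ≤ t
      nlinarith [mul_le_mul_of_nonneg_left hc (by linarith : (0:ℤ) ≤ q+1),
        mul_nonneg (mul_nonneg hq0.le hq0.le) ha, mul_pos hq0 hDpos]
  -- the slice set
  have hinj : Function.Injective (fun i : ℤ => ((i, r + 1 - q*i) : ℤ × ℤ)) := by
    intro a b h
    exact congrArg Prod.fst h
  have hT : ({ij : ℤ × ℤ | 0 ≤ (q + 1) * ij.1 - q * ij.2 ∧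
      (q + 1) * ij.1 - q * ij.2 < q ^ 3 + q ^ 2 + q ∧
      0 ≤ ij.1 + q ^ 2 * ij.2 ∧ q * ij.1 + ij.2 = r + 1})
      = (fun i : ℤ => ((i, r + 1 - q*i) : ℤ × ℤ)) '' Set.Icc i0 (i0 + q - 1) := by
    ext ⟨i, j⟩
    simp only [Set.mem_setOf_eq, Set.mem_image, Set.mem_Icc, Prod.mk.injEq]
    constructor
    · rintro ⟨ha, ha', hb, hc⟩
      refine ⟨i, ⟨?_, ?_⟩, rfl, by omega⟩
      · -- i0 ≤ i
        have hj : j = r + 1 - q*i := by omega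
        subst hj
        have : (q^2+q+1)*i0 < (q^2+q+1)*(i+1) := by nlinarith
        have := lt_of_mul_lt_mul_left this hDpos.le
        omega
      · have hj : j = r + 1 - q*i := by omega
        subst hj
        have : (q^2+q+1)*i < (q^2+q+1)*(i0+q) := by nlinarith
        have := lt_of_mul_lt_mul_left this hDpos.le
        omega
    · rintro ⟨i', ⟨hl, hrr⟩, rfl, rfl⟩
      have hml : (q^2+q+1)*i0 ≤ (q^2+q+1)*i' := by
        exact mul_le_mul_of_nonneg_left hl hDpos.le
      have hmu : (q^2+q+1)*i' ≤ (q^2+q+1)*(i0+q-1) := by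
        exact mul_le_mul_of_nonneg_left hrr hDpos.le
      have hup : (q^2+q+1)*i' < q*(r+1) + q*(q^2+q+1) := by nlinarith
      have hlo : q*(r+1) ≤ (q^2+q+1)*i' := le_trans h1 hml
      refine ⟨by nlinarith, by nlinarith, ?_, by ring⟩
      -- 0 ≤ i' + q^2*(r+1-q*i')
      nlinarith [mul_le_mul_of_nonneg_left hup.le (by nlinarith : (0:ℤ) ≤ q^3-1), hDpos]
  have hTfin : ({ij : ℤ × ℤ | 0 ≤ (q + 1) * ij.1 - q * ij.2 ∧
      (q + 1) * ij.1 - q * ij.2 < q ^ 3 + q ^ 2 + q ∧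
      0 ≤ ij.1 + q ^ 2 * ij.2 ∧ q * ij.1 + ij.2 = r + 1}).Finite := by
    rw [hT]; exact (Set.finite_Icc _ _).image _
  have hTcard : ({ij : ℤ × ℤ | 0 ≤ (q + 1) * ij.1 - q * ij.2 ∧
      (q + 1) * ij.1 - q * ij.2 < q ^ 3 + q ^ 2 + q ∧
      0 ≤ ij.1 + q ^ 2 * ij.2 ∧ q * ij.1 + ij.2 = r + 1}).ncard = q.toNat := by
    rw [hT, Set.ncard_image_of_injective _ hinj, ← Finset.coe_Icc,
      Set.ncard_coe_finset, Int.card_Icc]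
    congr 1
    ring
  have hsplit : ({ij : ℤ × ℤ | 0 ≤ (q + 1) * ij.1 - q * ij.2 ∧
      (q + 1) * ij.1 - q * ij.2 < q ^ 3 + q ^ 2 + q ∧
      0 ≤ ij.1 + q ^ 2 * ij.2 ∧ q * ij.1 + ij.2 ≤ r + 1})
      = ({ij : ℤ × ℤ | 0 ≤ (q + 1) * ij.1 - q * ij.2 ∧
      (q + 1) * ij.1 - q * ij.2 < q ^ 3 + q ^ 2 + q ∧
      0 ≤ ij.1 + q ^ 2 * ij.2 ∧ q * ij.1 + ij.2 ≤ r})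
      ∪ ({ij : ℤ × ℤ | 0 ≤ (q + 1) * ij.1 - q * ij.2 ∧
      (q + 1) * ij.1 - q * ij.2 < q ^ 3 + q ^ 2 + q ∧
      0 ≤ ij.1 + q ^ 2 * ij.2 ∧ q * ij.1 + ij.2 = r + 1}) := by
    ext ⟨i, j⟩
    simp only [Set.mem_setOf_eq, Set.mem_union]
    constructor
    · rintro ⟨ha, ha', hb, hc⟩
      rcases lt_or_eq_of_le hc with h | h
      · exact Or.inl ⟨ha, ha', hb, by omega⟩
      · exact Or.inr ⟨ha, ha', hb, h⟩
    · rintro (⟨ha, ha', hb, hc⟩ | ⟨ha, ha', hb, hc⟩) <;> exact ⟨ha, ha', hb, by omega⟩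
  have hdisj : Disjoint ({ij : ℤ × ℤ | 0 ≤ (q + 1) * ij.1 - q * ij.2 ∧
      (q + 1) * ij.1 - q * ij.2 < q ^ 3 + q ^ 2 + q ∧
      0 ≤ ij.1 + q ^ 2 * ij.2 ∧ q * ij.1 + ij.2 ≤ r})
      ({ij : ℤ × ℤ | 0 ≤ (q + 1) * ij.1 - q * ij.2 ∧
      (q + 1) * ij.1 - q * ij.2 < q ^ 3 + q ^ 2 + q ∧
      0 ≤ ij.1 + q ^ 2 * ij.2 ∧ q * ij.1 + ij.2 = r + 1}) := by
    rw [Set.disjoint_left]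
    rintro ⟨i, j⟩ ⟨_, _, _, hc⟩ ⟨_, _, _, hc'⟩
    omega
  rw [hsplit, Set.ncard_union_eq hdisj (hfin r hr0) hTfin, hTcard]
  push_cast [Int.toNat_of_nonneg hq0.le]
  ring
end

section
/- Let q ≥ 2 be an integer and r ≥ 0 an integer. The number of lattice points (i,j) ∈ ℤ² satisfying 0 ≤ (q+1)i − qj < q³ + q² + q, 0 ≤ i + q²j, and qi + j ≤ r equals the number of lattice points (i,j) ∈ ℤ² satisfying 0 ≤ (q+1)i − qj, qi + j ≤ r, and 0 ≤ j ≤ q² − 1. -/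
/-- auxiliary shift amount for the bijection -/
def s8m (q : ℤ) (p : ℤ × ℤ) : ℤ :=
  max (((q + 1) * p.1 - q * p.2) / (q ^ 2 + q + 1) + p.2 / q - q + 1) 0

def s8f (q : ℤ) (p : ℤ × ℤ) : ℤ × ℤ := (p.1 + s8m q p, p.2 - q * s8m q p)

def s8g (q : ℤ) (p : ℤ × ℤ) : ℤ × ℤ := (p.1 - s8m q p, p.2 + q * s8m q p)

lemma s8_Mpos {q : ℤ} (hq : 2 ≤ q) : 0 < q ^ 2 + q + 1 := by nlinarith

lemma s8m_shift {q : ℤ} (hq : 2 ≤ q) (p : ℤ × ℤ) (t : ℤ) :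
    s8m q (p.1 + t, p.2 - q * t) = s8m q p := by
  have hM : (q ^ 2 + q + 1) ≠ 0 := (s8_Mpos hq).ne'
  have hq0 : q ≠ 0 := by omega
  unfold s8m
  dsimp only
  have h1 : (q + 1) * (p.1 + t) - q * (p.2 - q * t)
      = ((q + 1) * p.1 - q * p.2) + t * (q ^ 2 + q + 1) := by ring
  have h2 : p.2 - q * t = p.2 + (-t) * q := by ring
  rw [h1, h2, Int.add_mul_ediv_right _ _ hM, Int.add_mul_ediv_right _ _ hq0]
  congr 1
  ring

lemma s8g_f {q : ℤ} (hq : 2 ≤ q) (p : ℤ × ℤ) : s8g q (s8f q p) = p := by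
  have h := s8m_shift hq p (s8m q p)
  show s8g q (p.1 + s8m q p, p.2 - q * s8m q p) = p
  unfold s8g
  dsimp only
  rw [h]
  ext <;> dsimp <;> ring

lemma s8f_g {q : ℤ} (hq : 2 ≤ q) (p : ℤ × ℤ) : s8f q (s8g q p) = p := by
  have h : s8g q p = (p.1 + (-(s8m q p)), p.2 - q * (-(s8m q p))) := by
    unfold s8g; ext <;> dsimp <;> ring
  have h2 := s8m_shift hq p (-(s8m q p))
  rw [h]
  unfold s8f
  dsimp only
  rw [h2]
  ext <;> dsimp <;> ring

/-- basic facts about `s8m` on set A' -/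
lemma s8f_mem {q r : ℤ} (hq : 2 ≤ q) {p : ℤ × ℤ}
    (h1 : 0 ≤ (q + 1) * p.1 - q * p.2)
    (h2 : (q + 1) * p.1 - q * p.2 < q ^ 3 + q ^ 2 + q)
    (h3 : 0 ≤ p.2) (h4 : q * p.1 + p.2 ≤ r) :
    0 ≤ (q + 1) * (s8f q p).1 - q * (s8f q p).2 ∧
      q * (s8f q p).1 + (s8f q p).2 ≤ r ∧
      0 ≤ (s8f q p).2 ∧ (s8f q p).2 ≤ q ^ 2 - 1 := by
  have hM : (0:ℤ) < q ^ 2 + q + 1 := s8_Mpos hq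
  have hq0 : (0:ℤ) < q := by omega
  set u := (q + 1) * p.1 - q * p.2 with hu
  set s := u / (q ^ 2 + q + 1) with hs
  set d := p.2 / q with hd
  have hs0 : 0 ≤ s := Int.ediv_nonneg h1 hM.le
  have hs1 : s < q := by
    rw [hs, Int.ediv_lt_iff_lt_mul hM]
    nlinarith
  have hd0 : 0 ≤ d := Int.ediv_nonneg h3 hq0.le
  have hjd : p.2 = q * d + p.2 % q := (Int.mul_ediv_add_emod p.2 q).symm
  have hb0 : 0 ≤ p.2 % q := Int.emod_nonneg _ hq0.ne'
  have hb1 : p.2 % q < q := Int.emod_lt_of_pos _ hq0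
  have hm : s8m q p = max (s + d - q + 1) 0 := rfl
  have hfm1 : (s8f q p).1 = p.1 + s8m q p := rfl
  have hfm2 : (s8f q p).2 = p.2 - q * s8m q p := rfl
  rcases le_or_gt (s + d - q + 1) 0 with hc | hc
  · have hm0 : s8m q p = 0 := by rw [hm]; exact max_eq_right hc
    refine ⟨?_, ?_, ?_, ?_⟩
    · rw [hfm1, hfm2, hm0]; nlinarith
    · rw [hfm1, hfm2, hm0]
      have heq : q * (p.1 + 0) + (p.2 - q * 0) = q * p.1 + p.2 := by ring
      rw [heq]; exact h4
    · rw [hfm2, hm0]; nlinarith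
    · rw [hfm2, hm0]
      have hdq : d ≤ q - 1 - s := by omega
      nlinarith
  · have hm0 : s8m q p = s + d - q + 1 := by rw [hm]; exact max_eq_left (by omega)
    have hmn : 0 ≤ s + d - q + 1 := by omega
    refine ⟨?_, ?_, ?_, ?_⟩
    · rw [hfm1, hfm2, hm0]; nlinarith
    · rw [hfm1, hfm2, hm0]
      have heq : q * (p.1 + (s + d - q + 1)) + (p.2 - q * (s + d - q + 1))
          = q * p.1 + p.2 := by ring
      rw [heq]; exact h4
    · rw [hfm2, hm0]
      have : p.2 - q * (s + d - q + 1) = q * (q - 1 - s) + p.2 % q := by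
        linear_combination hjd
      rw [this]
      nlinarith
    · rw [hfm2, hm0]
      have : p.2 - q * (s + d - q + 1) = q * (q - 1 - s) + p.2 % q := by
        linear_combination hjd
      rw [this]
      nlinarith

lemma s8g_mem {q r : ℤ} (hq : 2 ≤ q) {p : ℤ × ℤ}
    (h1 : 0 ≤ (q + 1) * p.1 - q * p.2)
    (h4 : q * p.1 + p.2 ≤ r)
    (h2 : 0 ≤ p.2) (h3 : p.2 ≤ q ^ 2 - 1) :
    0 ≤ (q + 1) * (s8g q p).1 - q * (s8g q p).2 ∧
      (q + 1) * (s8g q p).1 - q * (s8g q p).2 < q ^ 3 + q ^ 2 + q ∧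
      0 ≤ (s8g q p).2 ∧ q * (s8g q p).1 + (s8g q p).2 ≤ r := by
  have hM : (0:ℤ) < q ^ 2 + q + 1 := s8_Mpos hq
  have hq0 : (0:ℤ) < q := by omega
  set u := (q + 1) * p.1 - q * p.2 with hu
  set s := u / (q ^ 2 + q + 1) with hs
  set d := p.2 / q with hd
  have hs0 : 0 ≤ s := Int.ediv_nonneg h1 hM.le
  have hd0 : 0 ≤ d := Int.ediv_nonneg h2 hq0.le
  have hd1 : d < q := by
    rw [hd, Int.ediv_lt_iff_lt_mul hq0]
    nlinarith
  have hud : u = (q ^ 2 + q + 1) * s + u % (q ^ 2 + q + 1) :=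
    (Int.mul_ediv_add_emod u _).symm
  have ha0 : 0 ≤ u % (q ^ 2 + q + 1) := Int.emod_nonneg _ hM.ne'
  have ha1 : u % (q ^ 2 + q + 1) < q ^ 2 + q + 1 := Int.emod_lt_of_pos _ hM
  have hm : s8m q p = max (s + d - q + 1) 0 := rfl
  have hgm1 : (s8g q p).1 = p.1 - s8m q p := rfl
  have hgm2 : (s8g q p).2 = p.2 + q * s8m q p := rfl
  have key : (q + 1) * (s8g q p).1 - q * (s8g q p).2
      = u - (q ^ 2 + q + 1) * s8m q p := by
    rw [hgm1, hgm2, hu]; ring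
  rcases le_or_gt (s + d - q + 1) 0 with hc | hc
  · have hm0 : s8m q p = 0 := by rw [hm]; exact max_eq_right hc
    refine ⟨?_, ?_, ?_, ?_⟩
    · rw [key, hm0]; nlinarith
    · rw [key, hm0]
      have hsq : s ≤ q - 1 - d := by omega
      nlinarith
    · rw [hgm2, hm0]; nlinarith
    · rw [hgm1, hgm2, hm0]
      have heq : q * (p.1 - 0) + (p.2 + q * 0) = q * p.1 + p.2 := by ring
      rw [heq]; exact h4
  · have hm0 : s8m q p = s + d - q + 1 := by rw [hm]; exact max_eq_left (by omega)
    have hmn : 0 ≤ s + d - q + 1 := by omega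
    have hnew : u - (q ^ 2 + q + 1) * (s + d - q + 1)
        = (q ^ 2 + q + 1) * (q - 1 - d) + u % (q ^ 2 + q + 1) := by
      linear_combination hud
    refine ⟨?_, ?_, ?_, ?_⟩
    · rw [key, hm0, hnew]; nlinarith
    · rw [key, hm0, hnew]; nlinarith
    · rw [hgm2, hm0]; nlinarith
    · rw [hgm1, hgm2, hm0]
      have heq : q * (p.1 - (s + d - q + 1)) + (p.2 + q * (s + d - q + 1))
          = q * p.1 + p.2 := by ring
      rw [heq]; exact h4

theorem stmt_8 (q r : ℤ) (hq : 2 ≤ q) (hr : 0 ≤ r) :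
    {ij : ℤ × ℤ | 0 ≤ (q + 1) * ij.1 - q * ij.2 ∧
        (q + 1) * ij.1 - q * ij.2 < q ^ 3 + q ^ 2 + q ∧
        0 ≤ ij.1 + q ^ 2 * ij.2 ∧ q * ij.1 + ij.2 ≤ r}.ncard
      = {ij : ℤ × ℤ | 0 ≤ (q + 1) * ij.1 - q * ij.2 ∧ q * ij.1 + ij.2 ≤ r ∧
        0 ≤ ij.2 ∧ ij.2 ≤ q ^ 2 - 1}.ncard := by
  set A := {ij : ℤ × ℤ | 0 ≤ (q + 1) * ij.1 - q * ij.2 ∧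
        (q + 1) * ij.1 - q * ij.2 < q ^ 3 + q ^ 2 + q ∧
        0 ≤ ij.1 + q ^ 2 * ij.2 ∧ q * ij.1 + ij.2 ≤ r} with hA
  set B := {ij : ℤ × ℤ | 0 ≤ (q + 1) * ij.1 - q * ij.2 ∧ q * ij.1 + ij.2 ≤ r ∧
        0 ≤ ij.2 ∧ ij.2 ≤ q ^ 2 - 1} with hB
  -- replace the third condition of A by 0 ≤ j
  have hA' : A = {ij : ℤ × ℤ | 0 ≤ (q + 1) * ij.1 - q * ij.2 ∧
        (q + 1) * ij.1 - q * ij.2 < q ^ 3 + q ^ 2 + q ∧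
        0 ≤ ij.2 ∧ q * ij.1 + ij.2 ≤ r} := by
    rw [hA]
    ext p
    simp only [Set.mem_setOf_eq]
    have hkey : (q + 1) * (p.1 + q ^ 2 * p.2)
        = ((q + 1) * p.1 - q * p.2) + (q ^ 3 + q ^ 2 + q) * p.2 := by ring
    constructor
    · rintro ⟨h1, h2, h3, h4⟩
      refine ⟨h1, h2, ?_, h4⟩
      by_contra hneg
      push_neg at hneg
      have hj : p.2 ≤ -1 := by omega
      have hQ : (0:ℤ) < q ^ 3 + q ^ 2 + q := by nlinarith
      nlinarith [mul_nonneg (by linarith : (0:ℤ) ≤ q + 1) h3,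
        mul_le_mul_of_nonneg_left hj hQ.le]
    · rintro ⟨h1, h2, h3, h4⟩
      refine ⟨h1, h2, ?_, h4⟩
      have hQ : (0:ℤ) < q ^ 3 + q ^ 2 + q := by nlinarith
      have : 0 ≤ (q + 1) * (p.1 + q ^ 2 * p.2) := by
        rw [hkey]
        nlinarith [mul_le_mul_of_nonneg_left h3 hQ.le]
      by_contra hneg
      push_neg at hneg
      have hj : p.1 + q ^ 2 * p.2 ≤ -1 := by omega
      nlinarith [mul_le_mul_of_nonneg_left hj (by linarith : (0:ℤ) ≤ q + 1)]
  rw [hA']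
  set A' := {ij : ℤ × ℤ | 0 ≤ (q + 1) * ij.1 - q * ij.2 ∧
        (q + 1) * ij.1 - q * ij.2 < q ^ 3 + q ^ 2 + q ∧
        0 ≤ ij.2 ∧ q * ij.1 + ij.2 ≤ r} with hA2
  have hinj : Set.InjOn (s8f q) A' := by
    intro p hp p' hp' h
    have := congrArg (s8g q) h
    rwa [s8g_f hq, s8g_f hq] at this
  have himg : s8f q '' A' = B := by
    ext b
    constructor
    · rintro ⟨p, hp, rfl⟩
      obtain ⟨h1, h2, h3, h4⟩ := hp
      exact s8f_mem hq h1 h2 h3 h4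
    · intro hb
      obtain ⟨h1, h4, h2, h3⟩ := hb
      exact ⟨s8g q b, s8g_mem hq h1 h4 h2 h3, s8f_g hq b⟩
  rw [← himg, Set.ncard_image_of_injOn hinj]
end
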